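/- Let ψ_n(λ) := ((1/N)·Σ_{k=0}^{N−1} exp(iλβω_k / n^{1/N}))^n be the characteristic function of the normalized random walk S̃_n. Then for every real λ the following second-order asymptotic holds: lim_{n→∞} n·( ψ_n(λ) − exp(i^N α λ^N / N!) ) = (−1)^N · ( 1/(2N)! − 1/(2·(N!)^2) ) · α^2 · λ^{2N} · exp(i^N α λ^N / N!). -/

import Mathlib

open Complex Real Filter Finset

noncomputable def Fser (N : ℕ) (z : ℂ) : ℂ := ∑' j : ℕ, z ^ (N * j) / ((N * j).factorial : ℂ)

lemma summable_Fser (N : ℕ) (hN : N ≠ 0) (z : ℂ) :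
    Summable (fun j : ℕ => z ^ (N * j) / ((N * j).factorial : ℂ)) :=
  (NormedSpace.expSeries_div_summable z).comp_injective
    (fun _ _ hab => Nat.eq_of_mul_eq_mul_left (Nat.pos_of_ne_zero hN) hab)

lemma exp_tsum (w : ℂ) : Complex.exp w = ∑' m : ℕ, w ^ m / (m.factorial : ℂ) := by
  rw [Complex.exp_eq_exp_ℂ, NormedSpace.exp_eq_tsum_div]

lemma zeta_pow_N (N : ℕ) (hN : N ≠ 0) :
    Complex.exp (2 * (Real.pi : ℂ) * I / N) ^ N = 1 := by
  have hNc : (N : ℂ) ≠ 0 := Nat.cast_ne_zero.mpr hN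
  rw [← Complex.exp_nat_mul]
  rw [show (N : ℂ) * (2 * (Real.pi : ℂ) * I / N) = 2 * Real.pi * I by
    field_simp [mul_comm]]
  exact Complex.exp_two_pi_mul_I

lemma twopiI_ne : (2 : ℂ) * (Real.pi : ℂ) * I ≠ 0 := by
  simp [Real.pi_ne_zero, Complex.I_ne_zero]

lemma zeta_pow_eq_one_iff (N : ℕ) (hN : N ≠ 0) (m : ℕ) :
    Complex.exp (2 * (Real.pi : ℂ) * I / N) ^ m = 1 ↔ N ∣ m := by
  have hNc : (N : ℂ) ≠ 0 := Nat.cast_ne_zero.mpr hN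
  rw [← Complex.exp_nat_mul, Complex.exp_eq_one_iff]
  constructor
  · rintro ⟨t, ht⟩
    have h2 : (m : ℂ) * (2 * (Real.pi : ℂ) * I) = ((t : ℂ) * N) * (2 * (Real.pi : ℂ) * I) := by
      have := congrArg (fun x : ℂ => x * N) ht
      field_simp at this
      linear_combination (2 * (Real.pi : ℂ) * I) * this
    have h3 : (m : ℂ) = (t : ℂ) * N := mul_right_cancel₀ twopiI_ne h2
    have h3' : ((m : ℤ) : ℂ) = (((N : ℤ) * t : ℤ) : ℂ) := by push_cast; linear_combination h3
    have h4 : (N : ℤ) ∣ (m : ℤ) := ⟨t, by exact_mod_cast h3'⟩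
    exact_mod_cast h4
  · rintro ⟨c, rfl⟩
    refine ⟨c, ?_⟩
    push_cast
    field_simp

lemma sum_zeta_pow (N : ℕ) (hN : N ≠ 0) (m : ℕ) :
    ∑ k ∈ Finset.range N, (Complex.exp (2 * (Real.pi : ℂ) * I / N) ^ m) ^ k
      = if N ∣ m then (N : ℂ) else 0 := by
  set u := Complex.exp (2 * (Real.pi : ℂ) * I / N) ^ m with hu
  by_cases h : N ∣ m
  · rw [if_pos h]
    have hu1 : u = 1 := (zeta_pow_eq_one_iff N hN m).mpr h
    simp [hu1]
  · rw [if_neg h]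
    have hu1 : u ≠ 1 := fun hu1 => h ((zeta_pow_eq_one_iff N hN m).mp hu1)
    rw [geom_sum_eq hu1]
    have huN : u ^ N = 1 := by
      rw [hu, ← pow_mul, mul_comm m N, pow_mul, zeta_pow_N N hN, one_pow]
    simp [huN]

lemma char_eq (N : ℕ) (hN : N ≠ 0) (z : ℂ) :
    ∑ k ∈ Finset.range N, Complex.exp (z * Complex.exp (2 * (Real.pi:ℂ) * I * k / N))
      = N * Fser N z := by
  set ζ := Complex.exp (2 * (Real.pi : ℂ) * I / N) with hζ
  have hωk : ∀ k : ℕ, Complex.exp (2 * (Real.pi:ℂ) * I * k / N) = ζ ^ k := by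
    intro k
    rw [hζ, ← Complex.exp_nat_mul]
    congr 1
    ring
  have hsum : ∀ k ∈ Finset.range N, Summable (fun m : ℕ => (z * ζ ^ k) ^ m / (m.factorial : ℂ)) :=
    fun k _ => NormedSpace.expSeries_div_summable _
  have hinj : Function.Injective (fun j : ℕ => N * j) :=
    fun a b hab => Nat.eq_of_mul_eq_mul_left (Nat.pos_of_ne_zero hN) hab
  calc ∑ k ∈ Finset.range N, Complex.exp (z * Complex.exp (2 * (Real.pi:ℂ) * I * k / N))
      = ∑ k ∈ Finset.range N, ∑' m : ℕ, (z * ζ ^ k) ^ m / (m.factorial : ℂ) := by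
        refine Finset.sum_congr rfl fun k _ => ?_
        rw [hωk k, exp_tsum]
    _ = ∑' m : ℕ, ∑ k ∈ Finset.range N, (z * ζ ^ k) ^ m / (m.factorial : ℂ) :=
        (Summable.tsum_finsetSum hsum).symm
    _ = ∑' m : ℕ, (z ^ m / (m.factorial : ℂ)) * (if N ∣ m then (N:ℂ) else 0) := by
        refine tsum_congr fun m => ?_
        rw [← sum_zeta_pow N hN m, Finset.mul_sum]
        refine Finset.sum_congr rfl fun k _ => ?_
        rw [mul_pow, ← pow_mul, mul_comm k m, pow_mul]
        ring
    _ = N * Fser N z := by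
        rw [Fser, ← tsum_mul_left]
        refine (Function.Injective.tsum_eq hinj ?_).symm.trans (tsum_congr fun j => ?_)
        · intro m hm
          simp only [Function.mem_support] at hm
          by_contra hmem
          have : ¬ N ∣ m := by
            intro ⟨c, hc⟩
            exact hmem ⟨c, hc.symm⟩
          simp [this] at hm
        · simp only [Nat.dvd_mul_right, if_pos]
          ring

lemma one_div_factorial_tsum : ∑' j : ℕ, (1 : ℝ) / (j.factorial : ℝ) = Real.exp 1 := by
  rw [Real.exp_eq_exp_ℝ, NormedSpace.exp_eq_tsum_div]
  simp

lemma summable_one_div_factorial : Summable (fun j : ℕ => (1 : ℝ) / (j.factorial : ℝ)) := by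
  simpa using Real.summable_pow_div_factorial 1

lemma Fser_tail (N : ℕ) (hN : N ≠ 0) (z : ℂ) (hz : ‖z‖ ≤ 1) :
    ‖Fser N z - 1 - z ^ N / (N.factorial : ℂ) - z ^ (2 * N) / ((2 * N).factorial : ℂ)‖
      ≤ Real.exp 1 * ‖z‖ ^ (3 * N) := by
  have hs := summable_Fser N hN z
  have h3 := Summable.sum_add_tsum_nat_add (f := fun j : ℕ => z ^ (N * j) / ((N * j).factorial : ℂ)) 3 hs
  have hhead : ∑ j ∈ Finset.range 3, z ^ (N * j) / ((N * j).factorial : ℂ)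
      = 1 + z ^ N / (N.factorial : ℂ) + z ^ (2 * N) / ((2 * N).factorial : ℂ) := by
    rw [Finset.sum_range_succ, Finset.sum_range_succ, Finset.sum_range_succ,
      Finset.sum_range_zero]
    norm_num [mul_comm N 2]
  have hdiff : Fser N z - 1 - z ^ N / (N.factorial : ℂ) - z ^ (2 * N) / ((2 * N).factorial : ℂ)
      = ∑' j : ℕ, z ^ (N * (j + 3)) / ((N * (j + 3)).factorial : ℂ) := by
    rw [Fser, ← h3, hhead]
    ring
  rw [hdiff]
  have hsum2 : Summable (fun j : ℕ => ‖z ^ (N * (j + 3)) / ((N * (j + 3)).factorial : ℂ)‖) :=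
    (NormedSpace.norm_expSeries_div_summable z).comp_injective
      (fun a b hab => by
        have := Nat.eq_of_mul_eq_mul_left (Nat.pos_of_ne_zero hN) hab
        omega)
  have hsum3 : Summable (fun j : ℕ => ‖z‖ ^ (3 * N) * ((1:ℝ) / (j.factorial : ℝ))) :=
    summable_one_div_factorial.mul_left _
  refine (norm_tsum_le_tsum_norm hsum2).trans ?_
  have hterm : ∀ j : ℕ, ‖z ^ (N * (j + 3)) / ((N * (j + 3)).factorial : ℂ)‖
      ≤ ‖z‖ ^ (3 * N) * ((1:ℝ) / (j.factorial : ℝ)) := by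
    intro j
    rw [norm_div, norm_pow]
    have hfac : ‖((N * (j + 3)).factorial : ℂ)‖ = ((N * (j + 3)).factorial : ℝ) := by
      simp
    rw [hfac]
    have h1 : ‖z‖ ^ (N * (j + 3)) ≤ ‖z‖ ^ (3 * N) := by
      rw [show N * (j + 3) = 3 * N + N * j by ring, pow_add]
      have := pow_le_one₀ (norm_nonneg z) hz (n := N * j)
      calc ‖z‖ ^ (3 * N) * ‖z‖ ^ (N * j) ≤ ‖z‖ ^ (3 * N) * 1 :=
            mul_le_mul_of_nonneg_left this (pow_nonneg (norm_nonneg z) _)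
        _ = ‖z‖ ^ (3 * N) := mul_one _
    have h2 : ((j.factorial : ℝ)) ≤ ((N * (j + 3)).factorial : ℝ) := by
      exact_mod_cast Nat.factorial_le (by nlinarith [Nat.one_le_iff_ne_zero.mpr hN])
    have hjpos : (0:ℝ) < (j.factorial : ℝ) := by positivity
    have hNpos : (0:ℝ) < ((N * (j + 3)).factorial : ℝ) := by positivity
    calc ‖z‖ ^ (N * (j + 3)) / ((N * (j + 3)).factorial : ℝ)
        ≤ ‖z‖ ^ (3 * N) / ((N * (j + 3)).factorial : ℝ) := by
          gcongr
      _ ≤ ‖z‖ ^ (3 * N) / (j.factorial : ℝ) := by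
          gcongr
      _ = ‖z‖ ^ (3 * N) * ((1:ℝ) / (j.factorial : ℝ)) := by ring
  refine (Summable.tsum_le_tsum hterm hsum2 hsum3).trans ?_
  rw [tsum_mul_left, one_div_factorial_tsum]
  ring_nf
  exact le_refl _

lemma logTaylor_three (w : ℂ) : Complex.logTaylor 3 w = w - w ^ 2 / 2 := by
  simp [Complex.logTaylor_succ, Complex.logTaylor_zero]
  ring

lemma generic_limit (A B : ℂ) (g : ℕ → ℂ)
    (h : Tendsto (fun n : ℕ => (n : ℂ) ^ 2 * (g n - 1 - A / n - B / n ^ 2)) atTop (nhds 0)) :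
    Tendsto (fun n : ℕ => (n : ℂ) * ((g n) ^ n - Complex.exp A)) atTop
      (nhds (Complex.exp A * (B - A ^ 2 / 2))) := by
  set δ : ℕ → ℂ := fun n => g n - 1 with hδ
  have hg1 : ∀ n, (1 : ℂ) + δ n = g n := fun n => by simp [hδ]
  have hinv : Tendsto (fun n : ℕ => ((n : ℂ))⁻¹) atTop (nhds 0) :=
    tendsto_inv_atTop_nhds_zero_nat (𝕜 := ℂ)
  have hev1 : ∀ᶠ n : ℕ in atTop, 1 ≤ n := eventually_ge_atTop 1
  have hb : Tendsto (fun n : ℕ => (n : ℂ) ^ 2 * δ n - n * A) atTop (nhds B) := by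
    have heq : ∀ᶠ n : ℕ in atTop,
        B + (n : ℂ) ^ 2 * (g n - 1 - A / n - B / n ^ 2) = (n : ℂ) ^ 2 * δ n - n * A := by
      filter_upwards [hev1] with n hn
      have hnc : (n : ℂ) ≠ 0 := Nat.cast_ne_zero.mpr (by omega)
      field_simp [hδ]
      ring
    exact (Tendsto.congr' heq (by simpa using h.const_add B))
  have ha : Tendsto (fun n : ℕ => (n : ℂ) * δ n) atTop (nhds A) := by
    have heq : ∀ᶠ n : ℕ in atTop,
        A + ((n : ℂ) ^ 2 * δ n - n * A) * ((n : ℂ))⁻¹ = (n : ℂ) * δ n := by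
      filter_upwards [hev1] with n hn
      have hnc : (n : ℂ) ≠ 0 := Nat.cast_ne_zero.mpr (by omega)
      field_simp
      ring
    exact Tendsto.congr' heq (by simpa using (hb.mul hinv).const_add A)
  have hδ0 : Tendsto δ atTop (nhds 0) := by
    have heq : ∀ᶠ n : ℕ in atTop, ((n : ℂ) * δ n) * ((n : ℂ))⁻¹ = δ n := by
      filter_upwards [hev1] with n hn
      have hnc : (n : ℂ) ≠ 0 := Nat.cast_ne_zero.mpr (by omega)
      field_simp
    exact Tendsto.congr' heq (by simpa using ha.mul hinv)
  have hδsmall : ∀ᶠ n : ℕ in atTop, ‖δ n‖ ≤ 1 / 2 := by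
    have := hδ0.norm
    simp only [norm_zero] at this
    exact this.eventually_le_const (by norm_num)
  have hlog : Tendsto (fun n : ℕ =>
      (n : ℂ) ^ 2 * (Complex.log (g n) - δ n + δ n ^ 2 / 2)) atTop (nhds 0) := by
    apply squeeze_zero_norm' (a := fun n : ℕ => ‖(n : ℂ) * δ n‖ ^ 2 * ‖δ n‖ * (2 / 3))
    · filter_upwards [hδsmall] with n hn
      have h1 : ‖δ n‖ < 1 := lt_of_le_of_lt hn (by norm_num)
      have h2 := Complex.norm_log_sub_logTaylor_le 2 h1
      rw [logTaylor_three] at h2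
      have h3 : Complex.log (g n) - δ n + δ n ^ 2 / 2
          = Complex.log (1 + δ n) - (δ n - δ n ^ 2 / 2) := by
        rw [hg1 n]; ring
      rw [norm_mul, h3, norm_pow]
      have h4 : (1 - ‖δ n‖)⁻¹ ≤ 2 := by
        rw [inv_le_comm₀ (by linarith) (by norm_num)]
        linarith
      have h5 : ‖Complex.log (1 + δ n) - (δ n - δ n ^ 2 / 2)‖ ≤ ‖δ n‖ ^ 3 * (2 / 3) := by
        refine h2.trans ?_
        have h6 : ‖δ n‖ ^ (2 + 1) * (1 - ‖δ n‖)⁻¹ / ((2 : ℕ) + 1)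
            = ‖δ n‖ ^ 3 * (1 - ‖δ n‖)⁻¹ / 3 := by norm_num
        rw [h6]
        have h7 : ‖δ n‖ ^ 3 * (1 - ‖δ n‖)⁻¹ / 3 ≤ ‖δ n‖ ^ 3 * 2 / 3 := by
          gcongr
        linarith
      calc ‖(n : ℂ)‖ ^ 2 * ‖Complex.log (1 + δ n) - (δ n - δ n ^ 2 / 2)‖
          ≤ ‖(n : ℂ)‖ ^ 2 * (‖δ n‖ ^ 3 * (2 / 3)) := by
            exact mul_le_mul_of_nonneg_left h5 (by positivity)
        _ = ‖(n : ℂ) * δ n‖ ^ 2 * ‖δ n‖ * (2 / 3) := by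
            rw [norm_mul, mul_pow]
            ring
    · have : Tendsto (fun n : ℕ => ‖(n : ℂ) * δ n‖ ^ 2 * ‖δ n‖ * (2 / 3)) atTop
          (nhds (‖A‖ ^ 2 * ‖(0:ℂ)‖ * (2 / 3))) := (((ha.norm.pow 2).mul hδ0.norm).mul_const _)
      simpa using this
  set t : ℕ → ℂ := fun n => n * Complex.log (g n) - A with ht
  have hnt : Tendsto (fun n : ℕ => (n : ℂ) * t n) atTop (nhds (B - A ^ 2 / 2)) := by
    have heq : ∀ n : ℕ, (n : ℂ) * t n
        = (n : ℂ) ^ 2 * (Complex.log (g n) - δ n + δ n ^ 2 / 2)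
          + ((n : ℂ) ^ 2 * δ n - n * A) - ((n : ℂ) * δ n) ^ 2 / 2 := by
      intro n
      simp only [ht]
      ring
    rw [show (B - A ^ 2 / 2) = 0 + B - A ^ 2 / 2 by ring]
    exact Tendsto.congr (fun n => (heq n).symm)
      ((hlog.add hb).sub ((ha.pow 2).div_const 2))
  have ht0 : Tendsto t atTop (nhds 0) := by
    have heq : ∀ᶠ n : ℕ in atTop, ((n : ℂ) * t n) * ((n : ℂ))⁻¹ = t n := by
      filter_upwards [hev1] with n hn
      have hnc : (n : ℂ) ≠ 0 := Nat.cast_ne_zero.mpr (by omega)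
      field_simp
    exact Tendsto.congr' heq (by simpa using hnt.mul hinv)
  have hg0 : ∀ᶠ n : ℕ in atTop, g n ≠ 0 := by
    filter_upwards [hδsmall] with n hn
    intro hg
    have : ‖(0:ℂ) - 1‖ ≤ 1/2 := by simpa [hδ, hg] using hn
    norm_num at this
  have hrem : Tendsto (fun n : ℕ => (n : ℂ) * (Complex.exp (t n) - 1 - t n)) atTop (nhds 0) := by
    have htsmall : ∀ᶠ n : ℕ in atTop, ‖t n‖ ≤ 1 := by
      have := ht0.norm
      simp only [norm_zero] at this
      exact this.eventually_le_const (by norm_num)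
    apply squeeze_zero_norm' (a := fun n : ℕ => ‖(n : ℂ) * t n‖ * ‖t n‖)
    · filter_upwards [htsmall] with n hn
      have h2 : ‖Complex.exp (t n) - 1 - t n‖ ≤ ‖t n‖ ^ 2 := by
        simpa using Complex.norm_exp_sub_one_sub_id_le
          (by simpa using hn)
      calc ‖(n : ℂ) * (Complex.exp (t n) - 1 - t n)‖
          = ‖(n : ℂ)‖ * ‖Complex.exp (t n) - 1 - t n‖ := norm_mul _ _
        _ ≤ ‖(n : ℂ)‖ * ‖t n‖ ^ 2 := mul_le_mul_of_nonneg_left h2 (norm_nonneg _)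
        _ = ‖(n : ℂ) * t n‖ * ‖t n‖ := by rw [norm_mul]; ring
    · simpa using hnt.norm.mul ht0.norm
  have hfinal : ∀ᶠ n : ℕ in atTop, Complex.exp A * ((n : ℂ) * t n + (n : ℂ) *
      (Complex.exp (t n) - 1 - t n)) = (n : ℂ) * ((g n) ^ n - Complex.exp A) := by
    filter_upwards [hg0] with n hn
    have hpow : (g n) ^ n = Complex.exp A * Complex.exp (t n) := by
      conv_lhs => rw [← Complex.exp_log hn]
      rw [← Complex.exp_nat_mul, ← Complex.exp_add]
      congr 1
      simp only [ht]
      ring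
    rw [hpow]
    ring
  have := (hnt.add hrem).const_mul (Complex.exp A)
  rw [add_zero] at this
  exact Tendsto.congr' hfinal this


/-- second order asymptotics for the characteristic function
ψ_n(λ) = ((1/N)Σ_{k<N} exp(iλβω_k/n^{1/N}))^n of the normalized random walk:
lim_n n·(ψ_n(λ) − exp(i^N α λ^N/N!))
  = (−1)^N (1/(2N)! − 1/(2(N!)²)) α² λ^{2N} exp(i^N α λ^N/N!). -/
theorem second_order_asymptotics (N : ℕ) (hN : 2 < N) (α β : ℂ) (hβ : β ^ N = α) (l : ℝ) :
    Filter.Tendsto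
      (fun n : ℕ =>
        (n : ℂ) *
          (((1 / (N : ℂ)) *
            ∑ k ∈ Finset.range N,
              Complex.exp (Complex.I * l * β * Complex.exp (2 * Real.pi * Complex.I * k / N) /
                ((((n : ℝ) ^ ((N : ℝ)⁻¹)) : ℝ) : ℂ))) ^ n
            - Complex.exp (Complex.I ^ N * α * (l : ℂ) ^ N / (Nat.factorial N : ℂ))))
      Filter.atTop
      (nhds ((-1 : ℂ) ^ N *
        (1 / (Nat.factorial (2 * N) : ℂ) - 1 / (2 * (Nat.factorial N : ℂ) ^ 2)) *
        α ^ 2 * (l : ℂ) ^ (2 * N) *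
        Complex.exp (Complex.I ^ N * α * (l : ℂ) ^ N / (Nat.factorial N : ℂ)))) := by
  have hN0 : N ≠ 0 := by omega
  have hNc : (N : ℂ) ≠ 0 := Nat.cast_ne_zero.mpr hN0
  set w : ℂ := Complex.I ^ N * α * (l : ℂ) ^ N with hw
  set A : ℂ := w / (Nat.factorial N : ℂ) with hA
  set B : ℂ := w ^ 2 / (Nat.factorial (2 * N) : ℂ) with hB
  set g : ℕ → ℂ := fun n : ℕ => (1 / (N : ℂ)) *
      ∑ k ∈ Finset.range N,
        Complex.exp (Complex.I * l * β * Complex.exp (2 * Real.pi * Complex.I * k / N) /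
          ((((n : ℝ) ^ ((N : ℝ)⁻¹)) : ℝ) : ℂ)) with hgdef
  set z : ℕ → ℂ := fun n : ℕ => Complex.I * l * β / ((((n : ℝ) ^ ((N : ℝ)⁻¹)) : ℝ) : ℂ) with hzdef
  -- the scaling constant to the N-th power is n
  have hcN : ∀ n : ℕ, (((((n : ℝ) ^ ((N : ℝ)⁻¹)) : ℝ) : ℂ)) ^ N = (n : ℂ) := by
    intro n
    rw [← Complex.ofReal_pow, Real.rpow_inv_natCast_pow (Nat.cast_nonneg n) hN0]
    simp
  have hzN : ∀ n : ℕ, (z n) ^ N = w / n := by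
    intro n
    rw [hzdef]
    simp only
    rw [div_pow, hcN n, mul_pow, mul_pow, hβ, hw]
    ring_nf
  have hz2N : ∀ n : ℕ, (z n) ^ (2 * N) = (w / n) ^ 2 := by
    intro n
    rw [show 2 * N = N * 2 by ring, pow_mul, hzN n]
  have hz3N : ∀ n : ℕ, (z n) ^ (3 * N) = (w / n) ^ 3 := by
    intro n
    rw [show 3 * N = N * 3 by ring, pow_mul, hzN n]
  have hgF : ∀ n : ℕ, g n = Fser N (z n) := by
    intro n
    rw [hgdef]
    simp only
    have harg : ∀ k : ℕ,
        Complex.I * l * β * Complex.exp (2 * Real.pi * Complex.I * k / N) /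
          ((((n : ℝ) ^ ((N : ℝ)⁻¹)) : ℝ) : ℂ)
        = z n * Complex.exp (2 * (Real.pi : ℂ) * Complex.I * k / N) := by
      intro k
      rw [hzdef]
      simp only
      ring
    rw [Finset.sum_congr rfl (fun k _ => by rw [harg k]), char_eq N hN0 (z n)]
    field_simp
  have hr : Tendsto (fun n : ℕ => (n : ℂ) ^ 2 * (g n - 1 - A / n - B / n ^ 2)) atTop (nhds 0) := by
    apply squeeze_zero_norm' (a := fun n : ℕ => Real.exp 1 * ‖w‖ ^ 3 * ((n : ℝ))⁻¹)
    · filter_upwards [eventually_ge_atTop 1, eventually_ge_atTop (Nat.ceil ‖w‖)] with n hn1 hn2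
      have hnR : (0 : ℝ) < (n : ℝ) := by exact_mod_cast hn1
      have hnc : (n : ℂ) ≠ 0 := Nat.cast_ne_zero.mpr (by omega)
      have hwn : ‖w‖ ≤ (n : ℝ) := (Nat.ceil_le.mp hn2)
      have hznorm : ‖z n‖ ≤ 1 := by
        rw [← pow_le_one_iff_of_nonneg (norm_nonneg _) hN0, ← norm_pow, hzN n]
        rw [norm_div, Complex.norm_natCast]
        rw [div_le_one hnR]
        exact hwn
      have heq : g n - 1 - A / n - B / n ^ 2
          = Fser N (z n) - 1 - (z n) ^ N / (N.factorial : ℂ)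
            - (z n) ^ (2 * N) / ((2 * N).factorial : ℂ) := by
        rw [hgF n, hzN n, hz2N n, hA, hB]
        ring
      have hbound := Fser_tail N hN0 (z n) hznorm
      have hz3 : ‖z n‖ ^ (3 * N) = (‖w‖ / (n : ℝ)) ^ 3 := by
        rw [← norm_pow, hz3N n, norm_pow, norm_div, Complex.norm_natCast]
      calc ‖(n : ℂ) ^ 2 * (g n - 1 - A / n - B / n ^ 2)‖
          = (n : ℝ) ^ 2 * ‖g n - 1 - A / n - B / n ^ 2‖ := by
            rw [norm_mul, norm_pow, Complex.norm_natCast]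
        _ ≤ (n : ℝ) ^ 2 * (Real.exp 1 * ‖z n‖ ^ (3 * N)) := by
            rw [heq]
            exact mul_le_mul_of_nonneg_left hbound (by positivity)
        _ = Real.exp 1 * ‖w‖ ^ 3 * ((n : ℝ))⁻¹ := by
            rw [hz3]
            field_simp
    · have := (tendsto_inv_atTop_nhds_zero_nat (𝕜 := ℝ)).const_mul (Real.exp 1 * ‖w‖ ^ 3)
      simpa using this
  have hlim := generic_limit A B g hr
  have hw2 : w ^ 2 = (-1 : ℂ) ^ N * α ^ 2 * (l : ℂ) ^ (2 * N) := by
    have hI : (Complex.I ^ N) ^ 2 = (-1 : ℂ) ^ N := by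
      rw [← pow_mul, mul_comm, pow_mul, Complex.I_sq]
    have hl : ((l : ℂ) ^ N) ^ 2 = (l : ℂ) ^ (2 * N) := by
      rw [← pow_mul, mul_comm]
    calc w ^ 2 = (Complex.I ^ N) ^ 2 * α ^ 2 * ((l : ℂ) ^ N) ^ 2 := by rw [hw]; ring
      _ = (-1 : ℂ) ^ N * α ^ 2 * (l : ℂ) ^ (2 * N) := by rw [hI, hl]
  have hval : Complex.exp A * (B - A ^ 2 / 2)
      = (-1 : ℂ) ^ N *
        (1 / (Nat.factorial (2 * N) : ℂ) - 1 / (2 * (Nat.factorial N : ℂ) ^ 2)) *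
        α ^ 2 * (l : ℂ) ^ (2 * N) * Complex.exp A := by
    have h1 : B - A ^ 2 / 2
        = w ^ 2 * (1 / (Nat.factorial (2 * N) : ℂ) - 1 / (2 * (Nat.factorial N : ℂ) ^ 2)) := by
      rw [hB, hA]
      ring
    rw [h1, hw2]
    ring
  rw [hval] at hlim
  exact hlim
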